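/- Let c > 0, let f : ℝ^d → ℝ be convex and differentiable attaining its minimum f* at x*, and let h : ℝ^d → ℝ be convex and differentiable. Let X : [0, ∞) → ℝ^d be twice continuously differentiable and satisfy the exp-Nesterov flow: with Z_t = X_t + (1/c) Ẋ_t, the curve satisfies d/dt ∇h(Z_t) = −c e^{ct} ∇f(X_t). Then for all t ≥ 0, f(X_t) − f* ≤ ( f(X_0) − f* + D_h(x*, X_0 + (1/c) Ẋ_0) ) · e^{−ct}. -/

import Mathlib

open scoped RealInnerProductSpace
open Real Set

noncomputable section

/-- Bregman divergence `D_h(y, x) = h(y) − h(x) − ⟨∇h(x), y − x⟩`. -/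
def breg (d : ℕ) (h : EuclideanSpace ℝ (Fin d) → ℝ)
    (y x : EuclideanSpace ℝ (Fin d)) : ℝ :=
  h y - h x - ⟪gradient h x, y - x⟫

lemma grad_ineq' {d : ℕ} {f : EuclideanSpace ℝ (Fin d) → ℝ}
    (hconv : ConvexOn ℝ Set.univ f) (hf : Differentiable ℝ f)
    (x y : EuclideanSpace ℝ (Fin d)) :
    ⟪gradient f x, y - x⟫ ≤ f y - f x := by
  have hg : ConvexOn ℝ Set.univ (fun s : ℝ => f (x + s • (y - x))) := by
    have h1 := hconv.comp_affineMap (AffineMap.lineMap x y : ℝ →ᵃ[ℝ] _)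
    have heq : (fun s : ℝ => f (x + s • (y - x))) = f ∘ (AffineMap.lineMap x y) := by
      funext s
      simp [AffineMap.lineMap_apply, add_comm]
    rw [heq]
    simpa using h1
  have hline : HasDerivAt (fun s : ℝ => x + s • (y - x)) (y - x) (0 : ℝ) := by
    simpa using ((hasDerivAt_id (0 : ℝ)).smul_const (y - x)).const_add x
  have hF : HasFDerivAt f (InnerProductSpace.toDual ℝ _ (gradient f x)) x :=
    hasGradientAt_iff_hasFDerivAt.mp (hf x).hasGradientAt
  have hF' : HasFDerivAt f (InnerProductSpace.toDual ℝ _ (gradient f x))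
      (x + (0 : ℝ) • (y - x)) := by simpa using hF
  have hgd : HasDerivAt (fun s : ℝ => f (x + s • (y - x)))
      ⟪gradient f x, y - x⟫ 0 := by
    have h3 := hF'.comp_hasDerivAt 0 hline
    simp at h3 ⊢
    exact h3
  have hs := hg.le_slope_of_hasDerivAt (mem_univ (0 : ℝ)) (mem_univ (1 : ℝ))
    one_pos hgd
  simpa [slope_def_field] using hs

lemma hasDerivAt_comp_grad {d : ℕ} {f : EuclideanSpace ℝ (Fin d) → ℝ}
    (hf : Differentiable ℝ f) {X : ℝ → EuclideanSpace ℝ (Fin d)}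
    {v : EuclideanSpace ℝ (Fin d)} {t : ℝ} (hX : HasDerivAt X v t) :
    HasDerivAt (fun s => f (X s)) ⟪gradient f (X t), v⟫ t := by
  have hF : HasFDerivAt f (InnerProductSpace.toDual ℝ _ (gradient f (X t))) (X t) :=
    hasGradientAt_iff_hasFDerivAt.mp (hf (X t)).hasGradientAt
  have h3 := hF.comp_hasDerivAt t hX
  simp at h3 ⊢
  exact h3

theorem exp_nesterov_flow_rate
    (d : ℕ) (c : ℝ) (hc : 0 < c)
    (f h : EuclideanSpace ℝ (Fin d) → ℝ)
    (hconv : ConvexOn ℝ Set.univ f) (hf : Differentiable ℝ f)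
    (hhconv : ConvexOn ℝ Set.univ h) (hh : Differentiable ℝ h)
    (xstar : EuclideanSpace ℝ (Fin d)) (hmin : ∀ x, f xstar ≤ f x)
    (X X' X'' : ℝ → EuclideanSpace ℝ (Fin d))
    (hX : ∀ t ≥ (0 : ℝ), HasDerivAt X (X' t) t)
    (hX' : ∀ t ≥ (0 : ℝ), HasDerivAt X' (X'' t) t)
    (hX''cont : ContinuousOn X'' (Set.Ici 0))
    (hflow : ∀ t ≥ (0 : ℝ),
      HasDerivAt (fun s => gradient h (X s + (1 / c) • X' s))
        (-(c * Real.exp (c * t)) • gradient f (X t)) t) :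
    ∀ t ≥ (0 : ℝ),
      f (X t) - f xstar ≤
        (f (X 0) - f xstar + breg d h xstar (X 0 + (1 / c) • X' 0)) *
          Real.exp (-(c * t)) := by
  intro t ht
  set Z : ℝ → EuclideanSpace ℝ (Fin d) := fun s => X s + (1 / c) • X' s with hZdef
  set V : ℝ → ℝ := fun s =>
    Real.exp (c * s) * (f (X s) - f xstar) +
      (h xstar - h (Z s) - ⟪gradient h (Z s), xstar - Z s⟫) with hVdef
  -- derivative of V
  have hVd : ∀ u ≥ (0 : ℝ), HasDerivAt V
      (c * Real.exp (c * u) *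
        ((f (X u) - f xstar) + ⟪gradient f (X u), xstar - X u⟫)) u := by
    intro u hu
    have hZ' : HasDerivAt Z (X' u + (1 / c) • X'' u) u :=
      (hX u hu).add ((hX' u hu).const_smul (1 / c))
    have hfX : HasDerivAt (fun s => f (X s)) ⟪gradient f (X u), X' u⟫ u :=
      hasDerivAt_comp_grad hf (hX u hu)
    have hhZ : HasDerivAt (fun s => h (Z s))
        ⟪gradient h (Z u), X' u + (1 / c) • X'' u⟫ u :=
      hasDerivAt_comp_grad hh hZ'
    have hexp : HasDerivAt (fun s => Real.exp (c * s)) (c * Real.exp (c * u)) u := by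
      simpa [mul_comm] using ((hasDerivAt_id u).const_mul c).exp
    have hinner : HasDerivAt (fun s => ⟪gradient h (Z s), xstar - Z s⟫)
        (⟪gradient h (Z u), -(X' u + (1 / c) • X'' u)⟫ +
          ⟪-(c * Real.exp (c * u)) • gradient f (X u), xstar - Z u⟫) u := by
      have hg : HasDerivAt (fun s => xstar - Z s) (-(X' u + (1 / c) • X'' u)) u := by
        have h3 := (hasDerivAt_const u xstar).sub hZ'
        simp at h3 ⊢
        exact h3
      exact HasDerivAt.inner ℝ (hflow u hu) hg
    have hraw := (hexp.mul (hfX.sub_const (f xstar))).add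
      (((hasDerivAt_const u (h xstar)).sub hhZ).sub hinner)
    refine hraw.congr_deriv ?_
    simp only [inner_neg_right, inner_neg_left, real_inner_smul_left,
      inner_sub_right, inner_add_right, real_inner_smul_right, hZdef]
    field_simp
    ring
  -- V is antitone on [0, ∞)
  have hanti : AntitoneOn V (Set.Ici 0) := by
    apply antitoneOn_of_deriv_nonpos (convex_Ici 0)
    · exact fun u hu => (hVd u hu).continuousAt.continuousWithinAt
    · intro u hu
      rw [interior_Ici] at hu
      exact (hVd u (le_of_lt hu)).differentiableAt.differentiableWithinAt
    · intro u hu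
      rw [interior_Ici] at hu
      rw [(hVd u (le_of_lt hu)).deriv]
      have hgi := grad_ineq' hconv hf (X u) xstar
      have : (f (X u) - f xstar) + ⟪gradient f (X u), xstar - X u⟫ ≤ 0 := by linarith
      have hpos : 0 < c * Real.exp (c * u) := by positivity
      exact mul_nonpos_of_nonneg_of_nonpos (le_of_lt hpos) this
  have hVt : V t ≤ V 0 := hanti (self_mem_Ici) ht ht
  have hbreg : 0 ≤ h xstar - h (Z t) - ⟪gradient h (Z t), xstar - Z t⟫ := by
    have := grad_ineq' hhconv hh (Z t) xstar
    linarith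
  have hV0 : V 0 = f (X 0) - f xstar + breg d h xstar (X 0 + (1 / c) • X' 0) := by
    simp [hVdef, hZdef, breg]
  have hkey : Real.exp (c * t) * (f (X t) - f xstar) ≤
      f (X 0) - f xstar + breg d h xstar (X 0 + (1 / c) • X' 0) := by
    rw [← hV0]
    have : Real.exp (c * t) * (f (X t) - f xstar) ≤ V t := by
      simp only [hVdef]; linarith
    linarith
  have hepos : (0 : ℝ) < Real.exp (c * t) := Real.exp_pos _
  rw [Real.exp_neg, mul_comm]
  have h2 := mul_le_mul_of_nonneg_left hkey (le_of_lt (inv_pos.mpr hepos))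
  rwa [← mul_assoc, inv_mul_cancel₀ (ne_of_gt hepos), one_mul] at h2
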